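/- arXiv:1110.1105 — 7 statements merged into one kernel-verified Lean document; each statement's English description precedes it below -/
import Mathlib

section
/- Let α > 0 and let f : ℝ → ℝ be a function. There exists an α-Lipschitz function g : ℝ → ℝ with g ≤ f pointwise if and only if f is bounded below on compact intervals, liminf_{t → -∞} (f(t) - α t) > -∞, and liminf_{t → +∞} (f(t) + α t) > -∞. -/
open Filter Set

/-- A function `g : ℝ → ℝ` is `α`-Lipschitz if `|g s - g t| ≤ α * |s - t|` for all `s, t`. -/
def IsAlphaLipschitz (α : ℝ) (g : ℝ → ℝ) : Prop :=
  ∀ s t : ℝ, |g s - g t| ≤ α * |s - t|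

private lemma ereal_liminf_extract {l : Filter ℝ} {u : ℝ → ℝ}
    (h : Filter.liminf (fun t => ((u t : ℝ) : EReal)) l > ⊥) :
    ∃ c : ℝ, ∀ᶠ t in l, c ≤ u t := by
  obtain ⟨x, hx1, hx2⟩ := exists_between h
  have hx3 : x ≠ ⊤ := (hx2.trans_le le_top).ne
  lift x to ℝ using ⟨hx3, hx1.ne'⟩ with c
  refine ⟨c, ?_⟩
  filter_upwards [Filter.eventually_lt_of_lt_liminf hx2] with t ht
  exact_mod_cast ht.le

theorem exists_lipschitz_minorant_iff (α : ℝ) (hα : 0 < α) (f : ℝ → ℝ) :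
    (∃ g : ℝ → ℝ, IsAlphaLipschitz α g ∧ ∀ t, g t ≤ f t) ↔
      ((∀ a b : ℝ, BddBelow (f '' Set.Icc a b)) ∧
        Filter.liminf (fun t => ((f t - α * t : ℝ) : EReal)) Filter.atBot > ⊥ ∧
        Filter.liminf (fun t => ((f t + α * t : ℝ) : EReal)) Filter.atTop > ⊥) := by
  constructor
  · rintro ⟨g, hg, hgf⟩
    refine ⟨?_, ?_, ?_⟩
    · intro a b
      refine ⟨g a - α * |b - a|, ?_⟩
      rintro y ⟨t, ⟨hta, htb⟩, rfl⟩
      have h1 := (abs_le.mp (hg a t)).2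
      have h2 : |a - t| ≤ |b - a| := by
        rw [abs_sub_comm, abs_of_nonneg (by linarith : (0:ℝ) ≤ t - a),
          abs_of_nonneg (by linarith : (0:ℝ) ≤ b - a)]
        linarith
      have h3 : α * |a - t| ≤ α * |b - a| := mul_le_mul_of_nonneg_left h2 hα.le
      have h4 := hgf t
      linarith
    · have hev : ∀ᶠ t in atBot, ((g 0 : ℝ) : EReal) ≤ ((f t - α * t : ℝ) : EReal) := by
        filter_upwards [eventually_le_atBot (0:ℝ)] with t ht
        have h1 := (abs_le.mp (hg 0 t)).2
        have h2 : |(0:ℝ) - t| = -t := by rw [zero_sub, abs_neg, abs_of_nonpos ht]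
        rw [h2] at h1
        have h3 := hgf t
        have : (g 0 : ℝ) ≤ f t - α * t := by linarith
        exact_mod_cast this
      have hle : ((g 0 : ℝ) : EReal) ≤
          Filter.liminf (fun t => ((f t - α * t : ℝ) : EReal)) Filter.atBot := by
        calc ((g 0 : ℝ) : EReal) = Filter.liminf (fun _ => ((g 0 : ℝ) : EReal)) atBot :=
              (Filter.liminf_const _).symm
          _ ≤ _ := Filter.liminf_le_liminf hev
      exact lt_of_lt_of_le (EReal.bot_lt_coe _) hle
    · have hev : ∀ᶠ t in atTop, ((g 0 : ℝ) : EReal) ≤ ((f t + α * t : ℝ) : EReal) := by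
        filter_upwards [eventually_ge_atTop (0:ℝ)] with t ht
        have h1 := (abs_le.mp (hg 0 t)).2
        have h2 : |(0:ℝ) - t| = t := by rw [zero_sub, abs_neg, abs_of_nonneg ht]
        rw [h2] at h1
        have h3 := hgf t
        have : (g 0 : ℝ) ≤ f t + α * t := by linarith
        exact_mod_cast this
      have hle : ((g 0 : ℝ) : EReal) ≤
          Filter.liminf (fun t => ((f t + α * t : ℝ) : EReal)) Filter.atTop := by
        calc ((g 0 : ℝ) : EReal) = Filter.liminf (fun _ => ((g 0 : ℝ) : EReal)) atTop :=
              (Filter.liminf_const _).symm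
          _ ≤ _ := Filter.liminf_le_liminf hev
      exact lt_of_lt_of_le (EReal.bot_lt_coe _) hle
  · rintro ⟨hbdd, h1, h2⟩
    obtain ⟨c₁, hc₁⟩ := ereal_liminf_extract h1
    obtain ⟨c₂, hc₂⟩ := ereal_liminf_extract h2
    obtain ⟨A₁, hA₁⟩ := Filter.eventually_atBot.mp hc₁
    obtain ⟨A₂, hA₂⟩ := Filter.eventually_atTop.mp hc₂
    obtain ⟨m, hm⟩ := hbdd A₁ A₂
    have key : ∀ t s : ℝ, min (min (c₁ + α * t) (c₂ - α * t)) m ≤ f s + α * |t - s| := by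
      intro t s
      rcases le_or_gt s A₁ with hs | hs
      · have hfs := hA₁ s hs
        have habs : α * (t - s) ≤ α * |t - s| := mul_le_mul_of_nonneg_left (le_abs_self _) hα.le
        have h : c₁ + α * t ≤ f s + α * |t - s| := by nlinarith
        exact le_trans (le_trans (min_le_left _ _) (min_le_left _ _)) h
      rcases le_or_gt A₂ s with hs2 | hs2
      · have hfs := hA₂ s hs2
        have habs : α * (s - t) ≤ α * |t - s| := by
          rw [abs_sub_comm]
          exact mul_le_mul_of_nonneg_left (le_abs_self _) hα.le
        have h : c₂ - α * t ≤ f s + α * |t - s| := by nlinarith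
        exact le_trans (le_trans (min_le_left _ _) (min_le_right _ _)) h
      · have hfs : m ≤ f s := hm ⟨s, ⟨hs.le, hs2.le⟩, rfl⟩
        have hnn : 0 ≤ α * |t - s| := mul_nonneg hα.le (abs_nonneg _)
        have h : m ≤ f s + α * |t - s| := by linarith
        exact le_trans (min_le_right _ _) h
    set g : ℝ → ℝ := fun t => sInf (Set.range fun s => f s + α * |t - s|) with hgdef
    have hbb : ∀ t, BddBelow (Set.range fun s => f s + α * |t - s|) :=
      fun t => ⟨_, by rintro y ⟨s, rfl⟩; exact key t s⟩
    have hne : ∀ t, (Set.range fun s => f s + α * |t - s|).Nonempty := fun t => ⟨_, ⟨t, rfl⟩⟩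
    have hgle : ∀ t s, g t ≤ f s + α * |t - s| := fun t s => csInf_le (hbb t) ⟨s, rfl⟩
    have hgf : ∀ t, g t ≤ f t := by
      intro t
      have := hgle t t
      simpa using this
    have hstep : ∀ t₁ t₂, g t₁ - g t₂ ≤ α * |t₁ - t₂| := by
      intro t₁ t₂
      have hlb : g t₁ - α * |t₁ - t₂| ≤ g t₂ := by
        apply le_csInf (hne t₂)
        rintro y ⟨s, rfl⟩
        show g t₁ - α * |t₁ - t₂| ≤ f s + α * |t₂ - s|
        have h := hgle t₁ s
        have htri : |t₁ - s| ≤ |t₁ - t₂| + |t₂ - s| := abs_sub_le _ _ _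
        have h2 : α * |t₁ - s| ≤ α * |t₁ - t₂| + α * |t₂ - s| := by
          rw [← mul_add]
          exact mul_le_mul_of_nonneg_left htri hα.le
        linarith
      linarith
    refine ⟨g, fun s t => abs_le.mpr ⟨?_, ?_⟩, hgf⟩
    · have := hstep t s
      rw [abs_sub_comm] at this
      linarith
    · exact hstep s t
end

section
/- Let α > 0 and let f : ℝ → ℝ admit an α-Lipschitz minorant m. Define f←(t) := f(t) for t < 0 and f←(t) := m(0) - α t for t ≥ 0, and let m← be the α-Lipschitz minorant of f←. Then m←(t) = m(t) for all t ≤ 0. -/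
open Filter Set

/-- `m` is the `α`-Lipschitz minorant of `f`: the greatest `α`-Lipschitz function
dominated by `f`. -/
def IsLipMinorant (α : ℝ) (f m : ℝ → ℝ) : Prop :=
  IsAlphaLipschitz α m ∧ (∀ t, m t ≤ f t) ∧
    ∀ g : ℝ → ℝ, IsAlphaLipschitz α g → (∀ t, g t ≤ f t) → ∀ t, g t ≤ m t

lemma lip_min {α : ℝ} {g h : ℝ → ℝ} (hg : IsAlphaLipschitz α g)
    (hh : IsAlphaLipschitz α h) : IsAlphaLipschitz α (fun t => min (g t) (h t)) := by
  intro s t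
  refine le_trans (abs_min_sub_min_le_max _ _ _ _) ?_
  exact max_le (hg s t) (hh s t)

lemma lip_lin {α : ℝ} (hα : 0 < α) (c : ℝ) :
    IsAlphaLipschitz α (fun t => c - α * t) := by
  intro s t
  have : c - α * s - (c - α * t) = α * (t - s) := by ring
  rw [this, abs_mul, abs_of_pos hα, abs_sub_comm]

lemma lip_le_lin {α : ℝ} {g : ℝ → ℝ} (hg : IsAlphaLipschitz α g) {t : ℝ} (ht : t ≤ 0) :
    g t ≤ g 0 - α * t := by
  have := (abs_le.mp (hg t 0)).2
  have h0 : |t - 0| = -t := by rw [sub_zero, abs_of_nonpos ht]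
  rw [h0] at this
  linarith

theorem minorant_left_splice (α : ℝ) (hα : 0 < α) (f m mleft : ℝ → ℝ)
    (hm : IsLipMinorant α f m)
    (hml : IsLipMinorant α (fun t => if t < 0 then f t else m 0 - α * t) mleft) :
    ∀ t ≤ (0 : ℝ), mleft t = m t := by
  obtain ⟨hmL, hmle, hmmax⟩ := hm
  obtain ⟨hlL, hlle, hlmax⟩ := hml
  intro t ht
  have hle : mleft t ≤ m t := by
    have key : ∀ s, min (mleft s) (mleft 0 - α * s) ≤ f s := by
      intro s
      rcases lt_or_ge s 0 with hs | hs
      · have := hlle s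
        simp only [if_pos hs] at this
        exact le_trans (min_le_left _ _) this
      · have h0 : mleft 0 ≤ m 0 := by
          have := hlle 0
          simpa using this
        have : mleft 0 - α * s ≤ m 0 - α * s := by linarith
        refine le_trans (min_le_right _ _) (le_trans this ?_)
        refine le_trans ?_ (hmle s)
        have := lip_le_lin hmL (neg_nonpos.mpr hs)
        -- need m 0 - α * s ≤ m s for s ≥ 0 : from Lipschitz at s and 0
        have h2 := (abs_le.mp (hmL 0 s)).2
        have h3 : |(0 : ℝ) - s| = s := by rw [zero_sub, abs_neg, abs_of_nonneg hs]
        rw [h3] at h2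
        linarith
    have := hmmax _ (lip_min hlL (lip_lin hα _)) key t
    calc mleft t = min (mleft t) (mleft 0 - α * t) :=
          (min_eq_left (lip_le_lin hlL ht)).symm
      _ ≤ m t := this
  have hge : m t ≤ mleft t := by
    have key : ∀ s, min (m s) (m 0 - α * s) ≤ if s < 0 then f s else m 0 - α * s := by
      intro s
      rcases lt_or_ge s 0 with hs | hs
      · rw [if_pos hs]; exact le_trans (min_le_left _ _) (hmle s)
      · rw [if_neg (not_lt.mpr hs)]; exact min_le_right _ _
    have := hlmax _ (lip_min hmL (lip_lin hα _)) key t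
    calc m t = min (m t) (m 0 - α * t) := (min_eq_left (lip_le_lin hmL ht)).symm
      _ ≤ mleft t := this
  linarith
end

section
/- Let α > 0, let f : ℝ → ℝ be a càdlàg function (right-continuous with left limits) admitting an α-Lipschitz minorant m. Then the contact set {t ∈ ℝ : m(t) = f(t) ∧ f(t⁻)} is closed, where f(t⁻) denotes the left limit of f at t. -/
open Filter Set Topology

lemma fl_tendsto_right (f fl : ℝ → ℝ)
    (hrc : ∀ t : ℝ, ContinuousWithinAt f (Set.Ici t) t)
    (hll : ∀ t : ℝ, Filter.Tendsto f (nhdsWithin t (Set.Iio t)) (nhds (fl t)))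
    (t : ℝ) : Tendsto fl (𝓝[>] t) (𝓝 (f t)) := by
  rw [Metric.tendsto_nhdsWithin_nhds]
  intro ε hε
  have h2 : (0:ℝ) < ε/2 := by linarith
  obtain ⟨δ, hδ, hδ'⟩ := Metric.tendsto_nhdsWithin_nhds.mp (hrc t) (ε/2) h2
  refine ⟨δ, hδ, fun {s} hs hsd => ?_⟩
  have hts : t < s := hs
  have key : dist (fl s) (f t) ≤ ε/2 := by
    have hev : ∀ᶠ u in 𝓝[<] s, dist (f u) (f t) ≤ ε/2 := by
      filter_upwards [Ioo_mem_nhdsLT_of_mem (⟨hts, le_refl s⟩ : s ∈ Ioc t s)] with u hu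
      refine le_of_lt (hδ' (le_of_lt hu.1) ?_)
      rw [Real.dist_eq] at hsd ⊢
      rw [abs_of_pos (by linarith [hu.1] : (0:ℝ) < u - t)]
      rw [abs_of_pos (by linarith : (0:ℝ) < s - t)] at hsd
      linarith [hu.2]
    exact le_of_tendsto ((hll s).dist tendsto_const_nhds) hev
  linarith

lemma fl_tendsto_left (f fl : ℝ → ℝ)
    (hll : ∀ t : ℝ, Filter.Tendsto f (nhdsWithin t (Set.Iio t)) (nhds (fl t)))
    (t : ℝ) : Tendsto fl (𝓝[<] t) (𝓝 (fl t)) := by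
  rw [Metric.tendsto_nhdsWithin_nhds]
  intro ε hε
  have h2 : (0:ℝ) < ε/2 := by linarith
  obtain ⟨δ, hδ, hδ'⟩ := Metric.tendsto_nhdsWithin_nhds.mp (hll t) (ε/2) h2
  refine ⟨δ, hδ, fun {s} hs hsd => ?_⟩
  have hst : s < t := hs
  have hsd' : t - s < δ := by
    rw [Real.dist_eq, abs_of_neg (by linarith : s - t < 0)] at hsd; linarith
  have key : dist (fl s) (fl t) ≤ ε/2 := by
    have hev : ∀ᶠ u in 𝓝[<] s, dist (f u) (fl t) ≤ ε/2 := by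
      filter_upwards [Ioo_mem_nhdsLT_of_mem (⟨by linarith, le_refl s⟩ : s ∈ Ioc (t-δ) s)]
        with u hu
      refine le_of_lt (hδ' (by linarith [hu.2] : u < t) ?_)
      rw [Real.dist_eq, abs_of_neg (by linarith [hu.2] : u - t < 0)]
      linarith [hu.1]
    exact le_of_tendsto ((hll s).dist tendsto_const_nhds) hev
  linarith

theorem contact_set_isClosed (α : ℝ) (hα : 0 < α) (f fl m : ℝ → ℝ)
    (hrc : ∀ t : ℝ, ContinuousWithinAt f (Set.Ici t) t)
    (hll : ∀ t : ℝ, Filter.Tendsto f (nhdsWithin t (Set.Iio t)) (nhds (fl t)))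
    (hm : IsLipMinorant α f m) :
    IsClosed {t : ℝ | m t = min (f t) (fl t)} := by
  set S := {t : ℝ | m t = min (f t) (fl t)} with hS
  -- m is continuous
  have hlip : LipschitzWith (Real.toNNReal α) m := by
    apply LipschitzWith.of_dist_le_mul
    intro x y
    rw [Real.coe_toNNReal α hα.le, Real.dist_eq, Real.dist_eq]
    exact hm.1 x y
  have hmc : Continuous m := hlip.continuous
  have hmle : ∀ t, m t ≤ f t := hm.2.1
  have hmfl : ∀ t, m t ≤ fl t := fun t =>
    le_of_tendsto_of_tendsto' ((hmc.tendsto t).mono_left nhdsWithin_le_nhds) (hll t)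
      (fun s => hmle s)
  rw [← isOpen_compl_iff, isOpen_iff_mem_nhds]
  by_contra hcon
  push_neg at hcon
  obtain ⟨t, htS, ht⟩ := hcon
  have htcl : t ∈ closure S := by
    rw [mem_closure_iff_nhds]
    intro U hU
    by_contra hne
    push_neg at hne
    exact ht (mem_of_superset hU fun x hx => by
      by_contra hxS
      exact (eq_empty_iff_forall_notMem.mp hne x ⟨hx, not_not.mp hxS⟩))
  have hsub : S ⊆ (S ∩ Iio t) ∪ (S ∩ Ioi t) := by
    intro x hx
    rcases lt_trichotomy x t with h | h | h
    · exact Or.inl ⟨hx, h⟩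
    · exact absurd (h ▸ hx) htS
    · exact Or.inr ⟨hx, h⟩
  have : t ∈ closure (S ∩ Iio t) ∪ closure (S ∩ Ioi t) := by
    rw [← closure_union]
    exact closure_mono hsub htcl
  have hmt : m t ≠ min (f t) (fl t) := htS
  rcases this with hL | hR
  · -- approach from the left: m t = fl t
    have hne : (𝓝[S ∩ Iio t] t).NeBot := mem_closure_iff_nhdsWithin_neBot.mp hL
    set F := 𝓝[S ∩ Iio t] t
    have hF1 : F ≤ 𝓝[<] t := nhdsWithin_mono t inter_subset_right
    have hgt : Tendsto (fun s => min (f s) (fl s)) F (𝓝 (fl t)) := by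
      have := ((hll t).min (fl_tendsto_left f fl hll t)).mono_left hF1
      simpa using this
    have hmt' : Tendsto m F (𝓝 (m t)) := (hmc.tendsto t).mono_left nhdsWithin_le_nhds
    have heq : ∀ᶠ s in F, m s = min (f s) (fl s) := by
      filter_upwards [self_mem_nhdsWithin] with s hs
      exact hs.1
    have : m t = fl t := tendsto_nhds_unique (hmt'.congr' heq) hgt
    exact hmt (by rw [min_eq_right (this ▸ hmle t)]; exact this)
  · -- approach from the right: m t = f t
    have hne : (𝓝[S ∩ Ioi t] t).NeBot := mem_closure_iff_nhdsWithin_neBot.mp hR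
    set F := 𝓝[S ∩ Ioi t] t
    have hF1 : F ≤ 𝓝[>] t := nhdsWithin_mono t inter_subset_right
    have hfr : Tendsto f (𝓝[>] t) (𝓝 (f t)) :=
      (hrc t).mono_left (nhdsWithin_mono t Ioi_subset_Ici_self)
    have hgt : Tendsto (fun s => min (f s) (fl s)) F (𝓝 (f t)) := by
      have := (hfr.min (fl_tendsto_right f fl hrc hll t)).mono_left hF1
      simpa using this
    have hmt' : Tendsto m F (𝓝 (m t)) := (hmc.tendsto t).mono_left nhdsWithin_le_nhds
    have heq : ∀ᶠ s in F, m s = min (f s) (fl s) := by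
      filter_upwards [self_mem_nhdsWithin] with s hs
      exact hs.1
    have : m t = f t := tendsto_nhds_unique (hmt'.congr' heq) hgt
    exact hmt (by rw [min_eq_left (this ▸ hmfl t)]; exact this)
end

section
/- Let α > 0 and let f : ℝ → ℝ be a càdlàg function with α-Lipschitz minorant m. Suppose t' < t'' satisfy f(t') ∧ f(t'⁻) = m(t'), f(t'') ∧ f(t''⁻) = m(t''), and f(t) ∧ f(t⁻) > m(t) for all t ∈ (t', t''). Set t* := (f(t'') ∧ f(t''⁻) - f(t') ∧ f(t'⁻) + α(t'' + t'))/(2α). Then m(t) = f(t') ∧ f(t'⁻) + α(t - t') for t' ≤ t ≤ t*, and m(t) = f(t'') ∧ f(t''⁻) + α(t'' - t) for t* ≤ t ≤ t''. -/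
open Filter Set Topology

private lemma lipBound {α : ℝ} {m : ℝ → ℝ} (h : IsAlphaLipschitz α m) (s t : ℝ) :
    m t ≤ m s + α * |t - s| := by
  have h1 := h t s
  have h2 : m t - m s ≤ |m t - m s| := le_abs_self _
  linarith

private lemma existsNear {α : ℝ} (hα : 0 < α) {f m : ℝ → ℝ} (hm : IsLipMinorant α f m)
    (t : ℝ) {ε : ℝ} (hε : 0 < ε) : ∃ s, f s + α * |t - s| < m t + ε := by
  by_contra hcon
  push_neg at hcon
  set g : ℝ → ℝ := fun u => max (m u) (m t + ε - α * |u - t|) with hgdef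
  have hlip : IsAlphaLipschitz α g := by
    intro u v
    have h1 := hm.1 u v
    have h2 : |(m t + ε - α * |u - t|) - (m t + ε - α * |v - t|)| ≤ α * |u - v| := by
      have he : (m t + ε - α * |u - t|) - (m t + ε - α * |v - t|) = α * (|v - t| - |u - t|) := by
        ring
      rw [he, abs_mul, abs_of_pos hα]
      have h3 : |(|v - t| - |u - t|)| ≤ |v - t - (u - t)| := abs_abs_sub_abs_le_abs_sub _ _
      have h4 : |v - t - (u - t)| = |u - v| := by rw [abs_sub_comm]; ring_nf
      rw [h4] at h3
      exact mul_le_mul_of_nonneg_left h3 hα.le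
    calc |g u - g v| ≤ max |m u - m v| |(m t + ε - α * |u - t|) - (m t + ε - α * |v - t|)| :=
          abs_max_sub_max_le_max _ _ _ _
      _ ≤ α * |u - v| := max_le h1 h2
  have hle : ∀ u, g u ≤ f u := by
    intro u
    refine max_le (hm.2.1 u) ?_
    have := hcon u
    rw [abs_sub_comm] at this
    linarith
  have hgm := hm.2.2 g hlip hle t
  have hgt : m t + ε - α * |t - t| ≤ g t := le_max_right _ _
  simp at hgt
  linarith

private lemma sawtoothLB (α : ℝ) (hα : 0 < α) (f fl m : ℝ → ℝ)
    (hrc : ∀ t : ℝ, ContinuousWithinAt f (Set.Ici t) t)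
    (hll : ∀ t : ℝ, Filter.Tendsto f (nhdsWithin t (Set.Iio t)) (nhds (fl t)))
    (hm : IsLipMinorant α f m)
    (t₁ t₂ : ℝ) (hlt : t₁ < t₂)
    (h1 : min (f t₁) (fl t₁) = m t₁)
    (h2 : min (f t₂) (fl t₂) = m t₂)
    (h3 : ∀ t, t₁ < t → t < t₂ → m t < min (f t) (fl t))
    (t : ℝ) (ht1 : t₁ ≤ t) (ht2 : t ≤ t₂) :
    min (m t₁ + α * (t - t₁)) (m t₂ + α * (t₂ - t)) ≤ m t := by
  by_contra hcon
  push_neg at hcon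
  set S := min (m t₁ + α * (t - t₁)) (m t₂ + α * (t₂ - t)) with hSdef
  have hpos : 0 < S - m t := by linarith
  have hseq : ∀ n : ℕ, ∃ s, f s + α * |t - s| < m t + (S - m t) / (n + 1) := by
    intro n
    exact existsNear hα hm t (div_pos hpos (by positivity))
  choose s hs using hseq
  have hlow : ∀ n, m t ≤ f (s n) + α * |t - s n| := by
    intro n
    have h4 := lipBound hm.1 (s n) t
    have h5 := hm.2.1 (s n)
    linarith
  have hSlt : ∀ n, f (s n) + α * |t - s n| < S := by
    intro n
    have h4 := hs n
    have h5 : (S - m t) / (↑n + 1) ≤ S - m t := div_le_self hpos.le (by norm_num)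
    linarith
  have hmem : ∀ n, s n ∈ Set.Ioo t₁ t₂ := by
    intro n
    constructor
    · by_contra hle
      push_neg at hle
      have habs : |t - s n| = t - s n := abs_of_nonneg (by linarith)
      have h4 := lipBound hm.1 (s n) t₁
      have habs2 : |t₁ - s n| = t₁ - s n := abs_of_nonneg (by linarith)
      have h5 := hm.2.1 (s n)
      have h6 := hSlt n
      have h7 : S ≤ m t₁ + α * (t - t₁) := min_le_left _ _
      rw [habs] at h6
      rw [habs2] at h4
      have hring : α * (t - s n) = α * (t - t₁) + α * (t₁ - s n) := by ring
      linarith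
    · by_contra hle
      push_neg at hle
      have habs : |t - s n| = s n - t := by rw [abs_sub_comm]; exact abs_of_nonneg (by linarith)
      have h4 := lipBound hm.1 (s n) t₂
      have habs2 : |t₂ - s n| = s n - t₂ := by rw [abs_sub_comm]; exact abs_of_nonneg (by linarith)
      have h5 := hm.2.1 (s n)
      have h6 := hSlt n
      have h7 : S ≤ m t₂ + α * (t₂ - t) := min_le_right _ _
      rw [habs] at h6
      rw [habs2] at h4
      have hring : α * (s n - t) = α * (t₂ - t) + α * (s n - t₂) := by ring
      linarith
  have hF : Tendsto (fun n => f (s n) + α * |t - s n|) atTop (𝓝 (m t)) := by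
    have hub : Tendsto (fun n : ℕ => m t + (S - m t) / (n + 1)) atTop (𝓝 (m t)) := by
      have h0 : Tendsto (fun n : ℕ => (S - m t) * (1 / ((n : ℝ) + 1))) atTop
          (𝓝 ((S - m t) * 0)) := tendsto_one_div_add_atTop_nhds_zero_nat.const_mul _
      have h0' : Tendsto (fun n : ℕ => m t + (S - m t) * (1 / ((n : ℝ) + 1))) atTop
          (𝓝 (m t + (S - m t) * 0)) := tendsto_const_nhds.add h0
      simpa [mul_one_div, div_eq_mul_inv] using h0'
    exact tendsto_of_tendsto_of_tendsto_of_le_of_le tendsto_const_nhds hub hlow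
      (fun n => (hs n).le)
  obtain ⟨c, hc, φ, hφ, hsc⟩ :=
    (isCompact_Icc (a := t₁) (b := t₂)).tendsto_subseq
      (fun n => Set.Ioo_subset_Icc_self (hmem n))
  have key : ∃ L, min (f c) (fl c) ≤ L ∧ L + α * |t - c| = m t := by
    have hFφ : Tendsto (fun n => f (s (φ n)) + α * |t - s (φ n)|) atTop (𝓝 (m t)) :=
      hF.comp hφ.tendsto_atTop
    have habs : Tendsto (fun n => α * |t - s (φ n)|) atTop (𝓝 (α * |t - c|)) := by
      have hcont : Continuous fun x : ℝ => α * |t - x| := by continuity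
      exact (hcont.tendsto c).comp hsc
    have hfφ : Tendsto (fun n => f (s (φ n))) atTop (𝓝 (m t - α * |t - c|)) := by
      have := hFφ.sub habs
      simpa using this
    by_cases hev : ∀ᶠ n in atTop, s (φ n) < c
    · have hto : Tendsto (fun n => s (φ n)) atTop (𝓝[<] c) :=
        tendsto_nhdsWithin_of_tendsto_nhds_of_eventually_within _ hsc hev
      have hflc : Tendsto (fun n => f (s (φ n))) atTop (𝓝 (fl c)) := (hll c).comp hto
      have heq := tendsto_nhds_unique hfφ hflc
      exact ⟨fl c, min_le_right _ _, by rw [← heq]; ring⟩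
    · rw [Filter.not_eventually] at hev
      obtain ⟨ψ, hψ, hmemc⟩ := Filter.extraction_of_frequently_atTop hev
      have hto : Tendsto (fun n => s (φ (ψ n))) atTop (𝓝[Set.Ici c] c) :=
        tendsto_nhdsWithin_of_tendsto_nhds_of_eventually_within _
          (hsc.comp hψ.tendsto_atTop)
          (Filter.Eventually.of_forall fun n => not_lt.mp (hmemc n))
      have hfc : Tendsto (fun n => f (s (φ (ψ n)))) atTop (𝓝 (f c)) := Filter.Tendsto.comp (hrc c) hto
      have heq := tendsto_nhds_unique (hfφ.comp hψ.tendsto_atTop) hfc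
      exact ⟨f c, min_le_left _ _, by rw [← heq]; ring⟩
  obtain ⟨L, hLmin, hLeq⟩ := key
  rcases eq_or_lt_of_le hc.1 with hceq | hclt
  · have h7 : S ≤ m t₁ + α * (t - t₁) := min_le_left _ _
    have habs : |t - c| = t - t₁ := by rw [← hceq]; exact abs_of_nonneg (by linarith)
    have hmL : m t₁ ≤ L := by
      rw [← h1, hceq]
      exact hLmin
    rw [habs] at hLeq
    linarith
  · rcases eq_or_lt_of_le hc.2 with hceq2 | hclt2
    · have h7 : S ≤ m t₂ + α * (t₂ - t) := min_le_right _ _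
      have habs : |t - c| = t₂ - t := by
        rw [hceq2, abs_sub_comm]
        exact abs_of_nonneg (by linarith)
      have hmL : m t₂ ≤ L := by
        rw [← h2, ← hceq2]
        exact hLmin
      rw [habs] at hLeq
      linarith
    · have h8 := h3 c hclt hclt2
      have h9 := lipBound hm.1 c t
      linarith

theorem minorant_sawtooth (α : ℝ) (hα : 0 < α) (f fl m : ℝ → ℝ)
    (hrc : ∀ t : ℝ, ContinuousWithinAt f (Set.Ici t) t)
    (hll : ∀ t : ℝ, Filter.Tendsto f (nhdsWithin t (Set.Iio t)) (nhds (fl t)))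
    (hm : IsLipMinorant α f m)
    (t₁ t₂ : ℝ) (hlt : t₁ < t₂)
    (h1 : min (f t₁) (fl t₁) = m t₁)
    (h2 : min (f t₂) (fl t₂) = m t₂)
    (h3 : ∀ t, t₁ < t → t < t₂ → m t < min (f t) (fl t))
    (tstar : ℝ)
    (htstar : tstar = (min (f t₂) (fl t₂) - min (f t₁) (fl t₁) + α * (t₂ + t₁)) / (2 * α)) :
    (∀ t, t₁ ≤ t → t ≤ tstar → m t = min (f t₁) (fl t₁) + α * (t - t₁)) ∧
    (∀ t, tstar ≤ t → t ≤ t₂ → m t = min (f t₂) (fl t₂) + α * (t₂ - t)) := by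
  have hab := hm.1 t₁ t₂
  have habs : |t₁ - t₂| = t₂ - t₁ := by rw [abs_sub_comm]; exact abs_of_nonneg (by linarith)
  rw [habs] at hab
  obtain ⟨hab1, hab2⟩ := abs_le.mp hab
  rw [htstar, h1, h2]
  have hstar1 : t₁ ≤ (m t₂ - m t₁ + α * (t₂ + t₁)) / (2 * α) := by
    rw [le_div_iff₀ (by positivity)]
    nlinarith
  have hstar2 : (m t₂ - m t₁ + α * (t₂ + t₁)) / (2 * α) ≤ t₂ := by
    rw [div_le_iff₀ (by positivity)]
    nlinarith
  constructor
  · intro u hu1 hu2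
    have hu2' : u ≤ t₂ := le_trans hu2 hstar2
    have hlb := sawtoothLB α hα f fl m hrc hll hm t₁ t₂ hlt h1 h2 h3 u hu1 hu2'
    have hub : m u ≤ m t₁ + α * (u - t₁) := by
      have := lipBound hm.1 t₁ u
      rwa [abs_of_nonneg (by linarith : (0:ℝ) ≤ u - t₁)] at this
    have hu2'' : u * (2 * α) ≤ m t₂ - m t₁ + α * (t₂ + t₁) := by
      rw [le_div_iff₀ (by positivity)] at hu2
      exact hu2
    have hcmp : m t₁ + α * (u - t₁) ≤ m t₂ + α * (t₂ - u) := by nlinarith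
    rw [min_eq_left hcmp] at hlb
    linarith
  · intro u hu1 hu2
    have hu1' : t₁ ≤ u := le_trans hstar1 hu1
    have hlb := sawtoothLB α hα f fl m hrc hll hm t₁ t₂ hlt h1 h2 h3 u hu1' hu2
    have hub : m u ≤ m t₂ + α * (t₂ - u) := by
      have := lipBound hm.1 t₂ u
      have habs2 : |u - t₂| = t₂ - u := by rw [abs_sub_comm]; exact abs_of_nonneg (by linarith)
      rwa [habs2] at this
    have hu1'' : m t₂ - m t₁ + α * (t₂ + t₁) ≤ u * (2 * α) := by
      rw [div_le_iff₀ (by positivity)] at hu1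
      exact hu1
    have hcmp : m t₂ + α * (t₂ - u) ≤ m t₁ + α * (u - t₁) := by nlinarith
    rw [min_eq_right hcmp] at hlb
    linarith
end

section
/- For every α > 0, ∫₀^∞ [ (4α³/√(2π)) κ^{1/2} e^{-α²κ/2} - 4α⁴ κ Φ(-α κ^{1/2}) ] dκ = 1, where Φ(z) = ∫_{-∞}^z (2π)^{-1/2} e^{-t²/2} dt is the standard normal cumulative distribution function. -/
open MeasureTheory Set Filter

noncomputable def phi (t : ℝ) : ℝ := (Real.sqrt (2 * Real.pi))⁻¹ * Real.exp (-(t ^ 2 / 2))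

noncomputable def Phi (x : ℝ) : ℝ := ∫ t in Set.Iio x, phi t

lemma sqrt2pi_pos : 0 < Real.sqrt (2 * Real.pi) := Real.sqrt_pos.2 (by positivity)

lemma phi_nonneg (t : ℝ) : 0 ≤ phi t := by unfold phi; positivity

lemma phi_neg (t : ℝ) : phi (-t) = phi t := by simp [phi]

lemma phi_cont : Continuous phi := by unfold phi; fun_prop

lemma phi_int : Integrable phi := by
  have h := (integrable_exp_neg_mul_sq (by norm_num : (0:ℝ) < 1/2)).const_mul
    ((Real.sqrt (2 * Real.pi))⁻¹)
  refine h.congr (Filter.Eventually.of_forall fun t => ?_)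
  unfold phi; ring_nf

lemma phi_total : ∫ t, phi t = 1 := by
  have h : ∫ t, phi t = (Real.sqrt (2 * Real.pi))⁻¹ * ∫ t, Real.exp (-(1/2) * t ^ 2) := by
    rw [← integral_const_mul]
    congr 1; funext t; unfold phi; ring_nf
  rw [h, integral_gaussian, show Real.pi / (1/2) = 2 * Real.pi by ring]
  exact inv_mul_cancel₀ sqrt2pi_pos.ne'

lemma Phi_nonneg (x : ℝ) : 0 ≤ Phi x :=
  setIntegral_nonneg measurableSet_Iio fun t _ => phi_nonneg t

lemma Phi_zero : Phi 0 = 1/2 := by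
  have h1 : ∫ t in Iic (0:ℝ), phi t = ∫ t in Ioi (0:ℝ), phi t := by
    rw [← neg_zero, ← integral_comp_neg_Ioi]
    simp only [phi_neg, neg_zero]
  have h2 := intervalIntegral.integral_Iic_add_Ioi (b := (0:ℝ)) phi_int.integrableOn phi_int.integrableOn
  rw [phi_total] at h2
  have h3 : Phi 0 = ∫ t in Iic (0:ℝ), phi t := (integral_Iic_eq_integral_Iio).symm
  linarith

lemma Phi_hasDeriv (x : ℝ) : HasDerivAt Phi (phi x) x := by
  have key : Phi = fun y => Phi 0 + ∫ t in (0:ℝ)..y, phi t := by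
    funext y
    have h := intervalIntegral.integral_Iic_sub_Iic (a := (0:ℝ)) (b := y)
      phi_int.integrableOn phi_int.integrableOn
    simp only [Phi, ← integral_Iic_eq_integral_Iio]
    linarith
  rw [key]
  exact ((intervalIntegral.integral_hasDerivAt_right phi_int.intervalIntegrable
    phi_cont.stronglyMeasurable.stronglyMeasurableAtFilter
    phi_cont.continuousAt)).const_add _

lemma Phi_cont : Continuous Phi :=
  continuous_iff_continuousAt.2 fun x => (Phi_hasDeriv x).continuousAt

lemma phi_hasDeriv (y : ℝ) : HasDerivAt phi (-y * phi y) y := by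
  have h1 : HasDerivAt (fun y : ℝ => -(y ^ 2 / 2)) (-y) y := by
    have := ((hasDerivAt_pow 2 y).div_const 2).neg
    refine this.congr_deriv ?_; push_cast; ring
  have h2 := (Real.hasDerivAt_exp (-(y ^ 2 / 2))).comp y h1
  have h3 := h2.const_mul ((Real.sqrt (2 * Real.pi))⁻¹)
  have he : phi = fun z => (Real.sqrt (2 * Real.pi))⁻¹ * (Real.exp ∘ fun y : ℝ => -(y ^ 2 / 2)) z := by
    funext z; simp [phi, Function.comp]
  rw [he]
  refine h3.congr_deriv ?_
  simp only [phi, Function.comp]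
  ring

lemma Phi_bound {x : ℝ} (hx : 0 ≤ x) :
    Phi (-x) ≤ Real.sqrt 2 * Real.exp (-(x ^ 2 / 4)) := by
  set c := Real.sqrt (2 * Real.pi) with hc
  have hcpos := sqrt2pi_pos
  set g : ℝ → ℝ := fun t => (c⁻¹ * Real.exp (-(x ^ 2 / 4))) * Real.exp (-(1/4 : ℝ) * t ^ 2)
    with hg
  have hg_int : Integrable g :=
    (integrable_exp_neg_mul_sq (by norm_num : (0:ℝ) < 1/4)).const_mul _
  have step1 : Phi (-x) ≤ ∫ t in Iio (-x), g t := by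
    refine setIntegral_mono_on phi_int.integrableOn hg_int.integrableOn
      measurableSet_Iio fun t ht => ?_
    have ht' : t < -x := ht
    have hx2 : x ^ 2 ≤ t ^ 2 := by nlinarith
    unfold phi
    simp only [hg]
    rw [mul_assoc, ← Real.exp_add]
    have : (-(t ^ 2 / 2) : ℝ) ≤ -(x ^ 2 / 4) + -(1/4) * t ^ 2 := by nlinarith
    have := Real.exp_le_exp.2 this
    have hci : (0:ℝ) ≤ c⁻¹ := by positivity
    exact mul_le_mul_of_nonneg_left this hci
  have step2 : ∫ t in Iio (-x), g t ≤ ∫ t, g t :=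
    setIntegral_le_integral hg_int (Filter.Eventually.of_forall fun t => by
      rw [hg]; positivity)
  have step3 : ∫ t, g t = (c⁻¹ * Real.exp (-(x ^ 2 / 4))) * Real.sqrt (Real.pi / (1/4)) := by
    rw [hg, integral_const_mul, integral_gaussian]
  have step4 : (c⁻¹ * Real.exp (-(x ^ 2 / 4))) * Real.sqrt (Real.pi / (1/4))
      = Real.sqrt 2 * Real.exp (-(x ^ 2 / 4)) := by
    have h4 : Real.pi / (1/4) = 2 * (2 * Real.pi) := by ring
    rw [h4, Real.sqrt_mul (by norm_num), ← hc]
    field_simp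
    exact mul_inv_cancel₀ (by rw [hc]; exact hcpos.ne')
  linarith [step1, step2, step3 ▸ step4 ▸ (step2.trans_eq (step3.trans step4))]

lemma tendsto_pow_exp (n : ℕ) {b : ℝ} (hb : 0 < b) :
    Filter.Tendsto (fun κ : ℝ => κ ^ n * Real.exp (-(b * κ))) Filter.atTop (nhds 0) := by
  have h1 := Real.tendsto_pow_mul_exp_neg_atTop_nhds_zero n
  have h2 : Filter.Tendsto (fun κ : ℝ => b * κ) Filter.atTop Filter.atTop :=
    Filter.tendsto_id.const_mul_atTop hb
  have h3 := (h1.comp h2).const_mul ((b ^ n)⁻¹)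
  rw [mul_zero] at h3
  refine h3.congr fun κ => ?_
  simp only [Function.comp]
  rw [mul_pow]
  field_simp

noncomputable def Fant (α : ℝ) (κ : ℝ) : ℝ :=
  (-2*α^4*κ^2 - 2) * Phi (-(α * Real.sqrt κ))
    + (2*α^3*κ - 2*α) * Real.sqrt κ * phi (α * Real.sqrt κ)

noncomputable def fdens (α : ℝ) (κ : ℝ) : ℝ :=
  4*α^3 * Real.sqrt κ * phi (α * Real.sqrt κ) - 4*α^4 * κ * Phi (-(α * Real.sqrt κ))

lemma Fant_hasDeriv {α κ : ℝ} (hκ : 0 < κ) : HasDerivAt (Fant α) (fdens α κ) κ := by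
  have hs0 : Real.sqrt κ ≠ 0 := (Real.sqrt_pos.2 hκ).ne'
  have hs2 : Real.sqrt κ ^ 2 = κ := Real.sq_sqrt hκ.le
  have dsqrt : HasDerivAt Real.sqrt (1/(2*Real.sqrt κ)) κ := Real.hasDerivAt_sqrt hκ.ne'
  have dinner : HasDerivAt (fun κ : ℝ => -(α * Real.sqrt κ)) (-(α * (1/(2*Real.sqrt κ)))) κ :=
    (dsqrt.const_mul α).neg
  have dPhi : HasDerivAt (fun κ : ℝ => Phi (-(α * Real.sqrt κ)))
      (phi (-(α * Real.sqrt κ)) * (-(α * (1/(2*Real.sqrt κ))))) κ :=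
    by have := (Phi_hasDeriv (-(α * Real.sqrt κ))).comp κ dinner; exact this
  have dphi : HasDerivAt (fun κ : ℝ => phi (α * Real.sqrt κ))
      ((-(α * Real.sqrt κ) * phi (α * Real.sqrt κ)) * (α * (1/(2*Real.sqrt κ)))) κ :=
    by have := (phi_hasDeriv (α * Real.sqrt κ)).comp κ (dsqrt.const_mul α); exact this
  have dp1 : HasDerivAt (fun κ : ℝ => -2*α^4*κ^2 - 2) (-4*α^4*κ) κ := by
    have := ((hasDerivAt_pow 2 κ).const_mul (-2*α^4)).sub_const 2
    refine this.congr_deriv ?_; push_cast; ring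
  have dp2 : HasDerivAt (fun κ : ℝ => 2*α^3*κ - 2*α) (2*α^3) κ := by
    have := ((hasDerivAt_id κ).const_mul (2*α^3)).sub_const (2*α)
    refine this.congr_deriv ?_; ring
  have hF := (dp1.mul dPhi).add ((dp2.mul dsqrt).mul dphi)
  refine hF.congr_deriv (Eq.symm ?_)
  simp only [Pi.mul_apply]
  rw [phi_neg]
  set s := Real.sqrt κ with hs
  have hκ' : κ = s^2 := hs2.symm
  rw [fdens, ← hs, hκ']
  field_simp
  ring

lemma Fant_cont (α : ℝ) : Continuous (Fant α) := by
  unfold Fant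
  have h2 : Continuous fun κ : ℝ => α * Real.sqrt κ :=
    continuous_const.mul Real.continuous_sqrt
  have h1 : Continuous fun κ : ℝ => -(α * Real.sqrt κ) := h2.neg
  exact (((continuous_const.mul (continuous_pow 2)).sub continuous_const).mul
      (Phi_cont.comp h1)).add
    ((((continuous_const.mul continuous_id).sub continuous_const).mul
      Real.continuous_sqrt).mul (phi_cont.comp h2))

lemma Fant_zero (α : ℝ) : Fant α 0 = -1 := by
  simp [Fant, Phi_zero]

lemma sqrt_le_one_add {κ : ℝ} (hκ : 0 ≤ κ) : Real.sqrt κ ≤ 1 + κ := by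
  nlinarith [Real.sq_sqrt hκ, Real.sqrt_nonneg κ]

lemma kappa_le_exp {b κ : ℝ} (hb : 0 < b) : κ ≤ b⁻¹ * Real.exp (b * κ) := by
  have h := Real.add_one_le_exp (b * κ)
  have h2 : b * κ ≤ Real.exp (b * κ) := by linarith
  calc κ = b⁻¹ * (b * κ) := by field_simp
    _ ≤ b⁻¹ * Real.exp (b * κ) :=
        mul_le_mul_of_nonneg_left h2 (inv_nonneg.2 hb.le)

lemma p_eq (α : ℝ) {κ : ℝ} (hκ : 0 ≤ κ) :
    phi (α * Real.sqrt κ) = (Real.sqrt (2*Real.pi))⁻¹ * Real.exp (-(α^2 * κ / 2)) := by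
  unfold phi
  rw [mul_pow, Real.sq_sqrt hκ]

lemma P_le {α : ℝ} (hα : 0 ≤ α) {κ : ℝ} (hκ : 0 ≤ κ) :
    Phi (-(α * Real.sqrt κ)) ≤ Real.sqrt 2 * Real.exp (-(α^2 * κ / 4)) := by
  have h := Phi_bound (x := α * Real.sqrt κ) (by positivity)
  rwa [mul_pow, Real.sq_sqrt hκ] at h

lemma fdens_cont (α : ℝ) : Continuous (fdens α) := by
  unfold fdens
  have h2 : Continuous fun κ : ℝ => α * Real.sqrt κ :=
    continuous_const.mul Real.continuous_sqrt
  exact ((continuous_const.mul Real.continuous_sqrt).mul (phi_cont.comp h2)).sub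
    (((continuous_const.mul continuous_id).mul (Phi_cont.comp h2.neg)))

lemma fdens_bound {α : ℝ} (hα : 0 < α) {κ : ℝ} (hκ : 0 < κ) :
    |fdens α κ| ≤ (4*α^3*(Real.sqrt (2*Real.pi))⁻¹*(1+(α^2/8)⁻¹)
        + 4*α^4*Real.sqrt 2*(α^2/8)⁻¹) * Real.exp (-(α^2/8 * κ)) := by
  set b := α^2/8 with hbdef
  have hb : 0 < b := by positivity
  set c := Real.sqrt (2*Real.pi) with hcdef
  have hc : 0 < c := sqrt2pi_pos
  have hκ0 : 0 ≤ κ := hκ.le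
  have hsqk := Real.sqrt_nonneg κ
  have hsq : Real.sqrt κ ≤ (1 + b⁻¹) * Real.exp (b*κ) := by
    have h1 := sqrt_le_one_add hκ0
    have h2 := kappa_le_exp (b := b) (κ := κ) hb
    have h3 : 1 ≤ Real.exp (b*κ) := Real.one_le_exp (by positivity)
    nlinarith [inv_nonneg.2 hb.le]
  have key1 : Real.sqrt κ * Real.exp (-(α^2*κ/2)) ≤ (1+b⁻¹) * Real.exp (-(b*κ)) := by
    calc Real.sqrt κ * Real.exp (-(α^2*κ/2))
        ≤ ((1+b⁻¹) * Real.exp (b*κ)) * Real.exp (-(α^2*κ/2)) :=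
          mul_le_mul_of_nonneg_right hsq (Real.exp_pos _).le
      _ = (1+b⁻¹) * Real.exp (b*κ + -(α^2*κ/2)) := by rw [mul_assoc, ← Real.exp_add]
      _ ≤ (1+b⁻¹) * Real.exp (-(b*κ)) := by
          have harg : b*κ + -(α^2*κ/2) ≤ -(b*κ) := by rw [hbdef]; nlinarith
          have hpos : (0:ℝ) ≤ 1 + b⁻¹ := by positivity
          exact mul_le_mul_of_nonneg_left (Real.exp_le_exp.2 harg) hpos
  have key2 : κ * Real.exp (-(α^2*κ/4)) ≤ b⁻¹ * Real.exp (-(b*κ)) := by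
    calc κ * Real.exp (-(α^2*κ/4))
        ≤ (b⁻¹ * Real.exp (b*κ)) * Real.exp (-(α^2*κ/4)) :=
          mul_le_mul_of_nonneg_right (kappa_le_exp hb) (Real.exp_pos _).le
      _ = b⁻¹ * Real.exp (b*κ + -(α^2*κ/4)) := by rw [mul_assoc, ← Real.exp_add]
      _ ≤ b⁻¹ * Real.exp (-(b*κ)) := by
          have harg : b*κ + -(α^2*κ/4) ≤ -(b*κ) := by rw [hbdef]; nlinarith
          exact mul_le_mul_of_nonneg_left (Real.exp_le_exp.2 harg) (inv_nonneg.2 hb.le)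
  have hP := P_le hα.le hκ0
  have hPn := Phi_nonneg (-(α * Real.sqrt κ))
  have habs : |fdens α κ| ≤ 4*α^3*c⁻¹*(Real.sqrt κ * Real.exp (-(α^2*κ/2)))
      + 4*α^4*Real.sqrt 2*(κ * Real.exp (-(α^2*κ/4))) := by
    rw [fdens, p_eq α hκ0, ← hcdef]
    have hP2 : κ * Phi (-(α * Real.sqrt κ)) ≤ κ * (Real.sqrt 2 * Real.exp (-(α^2*κ/4))) :=
      mul_le_mul_of_nonneg_left hP hκ0
    have ht1 : (0:ℝ) ≤ 4*α^3 * Real.sqrt κ * (c⁻¹ * Real.exp (-(α^2*κ/2))) := by positivity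
    have ht2 : (0:ℝ) ≤ 4*α^4*κ * Phi (-(α * Real.sqrt κ)) := by positivity
    rw [abs_le]
    constructor <;>
      nlinarith [mul_le_mul_of_nonneg_left hP2 (by positivity : (0:ℝ) ≤ 4*α^4),
        Real.exp_pos (-(α^2*κ/2)), Real.exp_pos (-(α^2*κ/4))]
  calc |fdens α κ| ≤ 4*α^3*c⁻¹*(Real.sqrt κ * Real.exp (-(α^2*κ/2)))
        + 4*α^4*Real.sqrt 2*(κ * Real.exp (-(α^2*κ/4))) := habs
    _ ≤ 4*α^3*c⁻¹*((1+b⁻¹) * Real.exp (-(b*κ)))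
        + 4*α^4*Real.sqrt 2*(b⁻¹ * Real.exp (-(b*κ))) := by
        have h1 : (0:ℝ) ≤ 4*α^3*c⁻¹ := by positivity
        have h2 : (0:ℝ) ≤ 4*α^4*Real.sqrt 2 := by positivity
        exact add_le_add (mul_le_mul_of_nonneg_left key1 h1)
          (mul_le_mul_of_nonneg_left key2 h2)
    _ = (4*α^3*c⁻¹*(1+b⁻¹) + 4*α^4*Real.sqrt 2*b⁻¹) * Real.exp (-(b*κ)) := by ring

lemma fdens_integrableOn {α : ℝ} (hα : 0 < α) : IntegrableOn (fdens α) (Set.Ioi 0) := by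
  have hb : (0:ℝ) < α^2/8 := by positivity
  have hg : IntegrableOn (fun κ => (4*α^3*(Real.sqrt (2*Real.pi))⁻¹*(1+(α^2/8)⁻¹)
      + 4*α^4*Real.sqrt 2*(α^2/8)⁻¹) * Real.exp (-(α^2/8 * κ))) (Set.Ioi 0) := by
    have := (exp_neg_integrableOn_Ioi 0 hb).const_mul
      (4*α^3*(Real.sqrt (2*Real.pi))⁻¹*(1+(α^2/8)⁻¹) + 4*α^4*Real.sqrt 2*(α^2/8)⁻¹)
    simpa [mul_comm, IntegrableOn] using this
  refine Integrable.mono' hg ((fdens_cont α).aestronglyMeasurable.restrict) ?_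
  rw [ae_restrict_iff' measurableSet_Ioi]
  exact Filter.Eventually.of_forall fun κ hκ => by
    rw [Real.norm_eq_abs]; exact fdens_bound hα hκ

lemma Fant_tendsto {α : ℝ} (hα : 0 < α) :
    Filter.Tendsto (Fant α) Filter.atTop (nhds 0) := by
  set c := Real.sqrt (2*Real.pi) with hcdef
  have hc : 0 < c := sqrt2pi_pos
  set C := (2*α^4+2)*Real.sqrt 2 + (2*α^3+2*α)*c⁻¹ with hCdef
  have hb : (0:ℝ) < α^2/4 := by positivity
  have hlim : Filter.Tendsto (fun κ : ℝ => C * (κ^2 * Real.exp (-(α^2/4 * κ))))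
      Filter.atTop (nhds 0) := by
    have := (tendsto_pow_exp 2 hb).const_mul C
    simpa using this
  refine squeeze_zero_norm' ?_ hlim
  filter_upwards [Filter.eventually_ge_atTop (1:ℝ)] with κ hκ1
  have hκ0 : (0:ℝ) ≤ κ := by linarith
  have hsqk : Real.sqrt κ ≤ κ := by
    nlinarith [Real.sq_sqrt hκ0, Real.sqrt_nonneg κ]
  have hq : 1 ≤ κ^2 := by nlinarith
  have hP := P_le hα.le hκ0
  have hPn := Phi_nonneg (-(α * Real.sqrt κ))
  have hphin := phi_nonneg (α * Real.sqrt κ)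
  have hα3 : (0:ℝ) < α^3 := by positivity
  have hcoef : (0:ℝ) ≤ 2*α^3*κ+2*α := by
    nlinarith [mul_nonneg hα3.le hκ0]
  have hE : Real.exp (-(α^2*κ/2)) ≤ Real.exp (-(α^2/4*κ)) := by
    apply Real.exp_le_exp.2; nlinarith [sq_nonneg α]
  rw [show -(α^2*κ/4) = -(α^2/4*κ) by ring] at hP
  set E := Real.exp (-(α^2/4*κ)) with hEdef
  have hE0 : (0:ℝ) < E := Real.exp_pos _
  have h1 : ‖Fant α κ‖ ≤ (2*α^4*κ^2+2) * Phi (-(α * Real.sqrt κ))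
      + (2*α^3*κ+2*α) * Real.sqrt κ * phi (α * Real.sqrt κ) := by
    rw [Fant]
    refine (norm_add_le _ _).trans ?_
    rw [Real.norm_eq_abs, Real.norm_eq_abs, abs_mul, abs_mul, abs_mul]
    have e1 : |(-2*α^4*κ^2 - 2 : ℝ)| = 2*α^4*κ^2+2 := by
      rw [abs_of_nonpos (by nlinarith [sq_nonneg (α^2*κ)])]; ring
    have e2 : |(2*α^3*κ - 2*α : ℝ)| ≤ 2*α^3*κ+2*α := by
      rw [abs_le]
      constructor <;> nlinarith [mul_nonneg hα3.le hκ0]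
    rw [e1, abs_of_nonneg hPn, abs_of_nonneg (Real.sqrt_nonneg κ),
      abs_of_nonneg hphin]
    exact add_le_add le_rfl (mul_le_mul_of_nonneg_right
      (mul_le_mul_of_nonneg_right e2 (Real.sqrt_nonneg κ)) hphin)
  have h2 : (2*α^4*κ^2+2) * Phi (-(α * Real.sqrt κ))
      ≤ (2*α^4+2)*Real.sqrt 2 * (κ^2 * E) := by
    calc (2*α^4*κ^2+2) * Phi (-(α * Real.sqrt κ))
        ≤ (2*α^4*κ^2+2) * (Real.sqrt 2 * E) :=
          mul_le_mul_of_nonneg_left hP (by positivity)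
      _ ≤ ((2*α^4+2)*κ^2) * (Real.sqrt 2 * E) := by
          refine mul_le_mul_of_nonneg_right ?_ (by positivity)
          nlinarith [pow_le_pow_left₀ hκ0 (le_refl κ) 2]
      _ = (2*α^4+2)*Real.sqrt 2 * (κ^2 * E) := by ring
  have h3 : (2*α^3*κ+2*α) * Real.sqrt κ * phi (α * Real.sqrt κ)
      ≤ (2*α^3+2*α)*c⁻¹ * (κ^2 * E) := by
    rw [p_eq α hκ0, ← hcdef]
    have hmul : c⁻¹ * Real.exp (-(α^2*κ/2)) ≤ c⁻¹ * E :=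
      mul_le_mul_of_nonneg_left hE (by positivity)
    calc (2*α^3*κ+2*α) * Real.sqrt κ * (c⁻¹ * Real.exp (-(α^2*κ/2)))
        ≤ (2*α^3*κ+2*α) * κ * (c⁻¹ * E) := by
          refine mul_le_mul (mul_le_mul_of_nonneg_left hsqk hcoef) hmul
            (by positivity) ?_
          exact mul_nonneg hcoef hκ0
      _ ≤ (2*α^3+2*α)*κ * κ * (c⁻¹ * E) := by
          refine mul_le_mul_of_nonneg_right
            (mul_le_mul_of_nonneg_right ?_ hκ0) (by positivity)
          nlinarith [mul_nonneg hα.le (by linarith : (0:ℝ) ≤ κ - 1)]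
      _ = (2*α^3+2*α)*c⁻¹ * (κ^2 * E) := by ring
  calc ‖Fant α κ‖ ≤ _ := h1
    _ ≤ (2*α^4+2)*Real.sqrt 2 * (κ^2 * E)
        + (2*α^3+2*α)*c⁻¹ * (κ^2 * E) := add_le_add h2 h3
    _ = C * (κ^2 * E) := by rw [hCdef]; ring

theorem K_density_integrates_to_one (α : ℝ) (hα : 0 < α) :
    ∫ κ in Set.Ioi (0 : ℝ),
      (4 * α ^ 3 / Real.sqrt (2 * Real.pi)) * Real.sqrt κ * Real.exp (-(α ^ 2 * κ / 2))
        - 4 * α ^ 4 * κ *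
          (∫ t in Set.Iio (-(α * Real.sqrt κ)),
            (Real.sqrt (2 * Real.pi))⁻¹ * Real.exp (-(t ^ 2 / 2))) = 1 := by
  have key : ∫ κ in Set.Ioi (0:ℝ), fdens α κ = 0 - Fant α 0 :=
    integral_Ioi_of_hasDerivAt_of_tendsto ((Fant_cont α).continuousWithinAt)
      (fun x hx => Fant_hasDeriv hx) (fdens_integrableOn hα) (Fant_tendsto hα)
  rw [Fant_zero] at key
  have heq : ∫ κ in Set.Ioi (0:ℝ),
      ((4 * α ^ 3 / Real.sqrt (2 * Real.pi)) * Real.sqrt κ * Real.exp (-(α ^ 2 * κ / 2))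
        - 4 * α ^ 4 * κ * (∫ t in Set.Iio (-(α * Real.sqrt κ)),
          (Real.sqrt (2 * Real.pi))⁻¹ * Real.exp (-(t ^ 2 / 2))))
      = ∫ κ in Set.Ioi (0:ℝ), fdens α κ := by
    refine setIntegral_congr_fun measurableSet_Ioi fun κ hκ => ?_
    have hκ0 : (0:ℝ) ≤ κ := le_of_lt hκ
    show _ = fdens α κ
    rw [fdens, p_eq α hκ0]
    have hPhi : Phi (-(α * Real.sqrt κ)) = ∫ t in Set.Iio (-(α * Real.sqrt κ)),
        (Real.sqrt (2 * Real.pi))⁻¹ * Real.exp (-(t ^ 2 / 2)) := rfl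
    rw [← hPhi, div_eq_mul_inv]
    ring
  rw [heq, key]
  norm_num
end

section
/- For any c > 0, ∫₀^{1/2} ξ^{-3/2}(1-ξ)^{-3/2} exp(-c/(ξ(1-ξ))) dξ = e^{-4c} √π / √c. -/
open MeasureTheory Set

theorem integral_xi_identity (c : ℝ) (hc : 0 < c) :
    ∫ ξ in Set.Ioo (0 : ℝ) (1 / 2),
        ξ ^ (-(3 : ℝ) / 2) * (1 - ξ) ^ (-(3 : ℝ) / 2) * Real.exp (-(c / (ξ * (1 - ξ))))
      = Real.exp (-(4 * c)) * Real.sqrt Real.pi / Real.sqrt c := by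
  set f : ℝ → ℝ := fun ξ => (ξ * (1 - ξ))⁻¹ - 4 with hf_def
  set f' : ℝ → ℝ := fun ξ => -((1 - 2 * ξ) / (ξ * (1 - ξ)) ^ 2) with hf'_def
  set g : ℝ → ℝ := fun y => y ^ (-(1 : ℝ) / 2) * Real.exp (-(c * y)) with hg_def
  -- image of the interval
  have himg : f '' Set.Ioo (0 : ℝ) (1 / 2) = Set.Ioi (0 : ℝ) := by
    apply Set.eq_of_subset_of_subset
    · rintro y ⟨ξ, ⟨h0, h1⟩, rfl⟩
      have ht : 0 < ξ * (1 - ξ) := by nlinarith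
      have : ξ * (1 - ξ) < 1 / 4 := by nlinarith
      have : 4 < (ξ * (1 - ξ))⁻¹ := by
        rw [lt_inv_comm₀ (by norm_num) ht]; linarith
      simp only [f, Set.mem_Ioi]; linarith
    · rintro y hy
      rw [Set.mem_Ioi] at hy
      set s : ℝ := Real.sqrt (y / (y + 4)) with hs_def
      have hy4 : (0:ℝ) < y + 4 := by linarith
      have hs0 : 0 < s := Real.sqrt_pos.mpr (by positivity)
      have hs1 : s < 1 := by
        rw [hs_def, show (1:ℝ) = Real.sqrt 1 by simp]
        exact Real.sqrt_lt_sqrt (by positivity) (by rw [div_lt_one hy4]; linarith)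
      have hssq : s ^ 2 = y / (y + 4) := Real.sq_sqrt (by positivity)
      refine ⟨(1 - s) / 2, ⟨by linarith, by linarith⟩, ?_⟩
      have ht : (1 - s) / 2 * (1 - (1 - s) / 2) = (y + 4)⁻¹ := by
        have : (1 - s) / 2 * (1 - (1 - s) / 2) = (1 - s ^ 2) / 4 := by ring
        rw [this, hssq]
        field_simp
        ring
      simp only [f, ht]
      rw [inv_inv]; ring
  -- derivative
  have hderiv : ∀ ξ ∈ Set.Ioo (0 : ℝ) (1 / 2),
      HasDerivWithinAt f (f' ξ) (Set.Ioo (0 : ℝ) (1 / 2)) ξ := by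
    intro ξ ⟨h0, h1⟩
    have ht : ξ * (1 - ξ) ≠ 0 := by nlinarith
    have h1' : HasDerivAt (fun x : ℝ => x * (1 - x)) (1 * (1 - ξ) + ξ * (0 - 1)) ξ :=
      (hasDerivAt_id' ξ).mul ((hasDerivAt_const ξ (1:ℝ)).sub (hasDerivAt_id' ξ))
    have h2 := (((h1'.hasDerivWithinAt (s := Set.Ioo (0:ℝ) (1/2))).inv ht).sub_const 4)
    refine h2.congr_deriv ?_
    simp only [f', hf'_def]
    rw [neg_div, neg_inj]
    congr 1
    ring
  -- injectivity
  have hinj : Set.InjOn f (Set.Ioo (0 : ℝ) (1 / 2)) := by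
    rintro a ⟨ha0, ha1⟩ b ⟨hb0, hb1⟩ hab
    have hta : a * (1 - a) ≠ 0 := by nlinarith
    have htb : b * (1 - b) ≠ 0 := by nlinarith
    have : (a * (1 - a))⁻¹ = (b * (1 - b))⁻¹ := by
      simpa [f, sub_left_inj] using hab
    have h : a * (1 - a) = b * (1 - b) := by
      exact inv_injective this
    nlinarith [sq_nonneg (a - b)]
  have key := integral_image_eq_integral_abs_deriv_smul measurableSet_Ioo hderiv hinj g
  rw [himg] at key
  -- gamma integral
  have hgamma : ∫ y in Set.Ioi (0:ℝ), g y = Real.sqrt Real.pi / Real.sqrt c := by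
    have := Real.integral_rpow_mul_exp_neg_mul_Ioi (a := 1/2) (r := c) (by norm_num) hc
    simp only [hg_def]
    rw [show (-(1:ℝ)/2) = 1/2 - 1 by norm_num]
    rw [this, Real.Gamma_one_half_eq]
    rw [show ((1:ℝ)/c) = c⁻¹ by ring, show ((1:ℝ)/2) = (1/2:ℝ) by norm_num,
      ← Real.sqrt_eq_rpow, Real.sqrt_inv]
    ring
  -- pointwise identity on the interval
  have hpt : ∀ ξ ∈ Set.Ioo (0 : ℝ) (1 / 2),
      |f' ξ| • g (f ξ) = Real.exp (4 * c) *
        (ξ ^ (-(3 : ℝ) / 2) * (1 - ξ) ^ (-(3 : ℝ) / 2) * Real.exp (-(c / (ξ * (1 - ξ))))) := by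
    intro ξ ⟨h0, h1⟩
    have ht : 0 < ξ * (1 - ξ) := by nlinarith
    have hd : 0 < 1 - 2 * ξ := by linarith
    have hfξ : f ξ = (1 - 2 * ξ) ^ 2 / (ξ * (1 - ξ)) := by
      simp only [f]
      have hξ : ξ ≠ 0 := h0.ne'
      have h1ξ : (1:ℝ) - ξ ≠ 0 := by linarith
      field_simp
      ring
    have habs : |f' ξ| = (1 - 2 * ξ) / (ξ * (1 - ξ)) ^ 2 := by
      simp only [f', abs_neg]
      exact abs_of_pos (by positivity)
    have hrw1 : (f ξ) ^ (-(1 : ℝ) / 2) = Real.sqrt (ξ * (1 - ξ)) / (1 - 2 * ξ) := by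
      rw [hfξ, show (-(1:ℝ)/2) = -(1/2) by norm_num, Real.rpow_neg (by positivity),
        ← Real.sqrt_eq_rpow, Real.sqrt_div' _ (by positivity), Real.sqrt_sq hd.le]
      rw [inv_div]
    have hrw2 : ξ ^ (-(3 : ℝ) / 2) * (1 - ξ) ^ (-(3 : ℝ) / 2)
        = (ξ * (1 - ξ)) ^ (-(3 : ℝ) / 2) := (Real.mul_rpow h0.le (by linarith)).symm
    have hrw3 : (ξ * (1 - ξ)) ^ (-(3 : ℝ) / 2)
        = Real.sqrt (ξ * (1 - ξ)) / (ξ * (1 - ξ)) ^ 2 := by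
      rw [show (-(3:ℝ)/2) = 1/2 - 2 by norm_num, Real.rpow_sub ht,
        Real.rpow_two, ← Real.sqrt_eq_rpow]
    have hexp : Real.exp (-(c * f ξ)) = Real.exp (4 * c) * Real.exp (-(c / (ξ * (1 - ξ)))) := by
      rw [← Real.exp_add]
      congr 1
      simp only [f]
      field_simp
      ring
    have hgfx : g (f ξ) = (f ξ) ^ (-(1:ℝ)/2) * Real.exp (-(c * f ξ)) := rfl
    rw [smul_eq_mul, hgfx, hrw1, habs, hexp, hrw2, hrw3]
    have hd' : (1 - 2 * ξ) ≠ 0 := ne_of_gt hd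
    have ht' : ξ * (1 - ξ) ≠ 0 := ne_of_gt ht
    field_simp
  rw [setIntegral_congr_fun measurableSet_Ioo hpt] at key
  rw [MeasureTheory.integral_const_mul] at key
  rw [hgamma] at key
  have hE : Real.exp (4 * c) ≠ 0 := Real.exp_ne_zero _
  rw [Real.exp_neg]
  field_simp at key ⊢
  linarith [key]
end

section
/- Let α > 0 and let f : ℝ → ℝ be càdlàg with α-Lipschitz minorant m. If t₀ satisfies f(t₀) ∧ f(t₀⁻) > m(t₀), then there exists δ > 0 such that f(s) ∧ f(s⁻) > m(s) for all s with |s - t₀| < δ. -/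
open Filter Set

theorem contact_complement_isOpen (α : ℝ) (hα : 0 < α) (f fl m : ℝ → ℝ)
    (hrc : ∀ t : ℝ, ContinuousWithinAt f (Set.Ici t) t)
    (hll : ∀ t : ℝ, Filter.Tendsto f (nhdsWithin t (Set.Iio t)) (nhds (fl t)))
    (hm : IsLipMinorant α f m)
    (t₀ : ℝ) (h : m t₀ < min (f t₀) (fl t₀)) :
    ∃ δ > (0 : ℝ), ∀ s : ℝ, |s - t₀| < δ → m s < min (f s) (fl s) := by
  set ε : ℝ := min (f t₀) (fl t₀) - m t₀ with hε_def
  have hε : 0 < ε := sub_pos.mpr h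
  -- right continuity at t₀
  have h1 := (Metric.tendsto_nhdsWithin_nhds.mp (hrc t₀)) (ε / 2) (by linarith)
  obtain ⟨δ₁, hδ₁, H₁⟩ := h1
  -- left limit at t₀
  have h2 := (Metric.tendsto_nhdsWithin_nhds.mp (hll t₀)) (ε / 2) (by linarith)
  obtain ⟨δ₂, hδ₂, H₂⟩ := h2
  set c : ℝ := min δ₁ δ₂ with hc_def
  have hc : 0 < c := lt_min hδ₁ hδ₂
  -- key lower bound for f near t₀
  have hf : ∀ u : ℝ, |u - t₀| < c → m t₀ + ε / 2 ≤ f u := by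
    intro u hu
    rcases le_or_gt t₀ u with hle | hlt
    · have := H₁ (Set.mem_Ici.mpr hle) (by simpa [Real.dist_eq] using hu.trans_le (min_le_left _ _))
      rw [Real.dist_eq] at this
      have hft : m t₀ + ε ≤ f t₀ := by
        have := min_le_left (f t₀) (fl t₀); rw [hε_def]; linarith
      have := abs_lt.mp this
      linarith [this.1]
    · have := H₂ (Set.mem_Iio.mpr hlt) (by simpa [Real.dist_eq] using hu.trans_le (min_le_right _ _))
      rw [Real.dist_eq] at this
      have hft : m t₀ + ε ≤ fl t₀ := by
        have := min_le_right (f t₀) (fl t₀); rw [hε_def]; linarith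
      have := abs_lt.mp this
      linarith [this.1]
  refine ⟨min c (ε / (2 * α)), lt_min hc (by positivity), fun s hs => ?_⟩
  have hs₁ : |s - t₀| < c := hs.trans_le (min_le_left _ _)
  have hs₂ : |s - t₀| < ε / (2 * α) := hs.trans_le (min_le_right _ _)
  -- m s < m t₀ + ε/2
  have hms : m s < m t₀ + ε / 2 := by
    have hlip := hm.1 s t₀
    have h1 : m s - m t₀ ≤ α * |s - t₀| := (le_abs_self _).trans hlip
    have h2 : α * |s - t₀| < α * (ε / (2 * α)) := by
      exact mul_lt_mul_of_pos_left hs₂ hα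
    have h3 : α * (ε / (2 * α)) = ε / 2 := by field_simp
    linarith
  -- f s lower bound
  have hfs : m t₀ + ε / 2 ≤ f s := hf s hs₁
  -- fl s lower bound
  have hb : ∀ᶠ u in nhdsWithin s (Set.Iio s), |u - t₀| < c := by
    apply eventually_nhdsWithin_of_eventually_nhds
    have hmem : Metric.ball t₀ c ∈ nhds s :=
      Metric.isOpen_ball.mem_nhds (by simpa [Metric.mem_ball, Real.dist_eq] using hs₁)
    filter_upwards [hmem] with u hu
    simpa [Metric.mem_ball, Real.dist_eq] using hu
  have hfls : m t₀ + ε / 2 ≤ fl s :=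
    ge_of_tendsto (hll s) (hb.mono fun u hu => hf u hu)
  exact lt_min (lt_of_lt_of_le hms hfs) (lt_of_lt_of_le hms hfls)
end
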